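/- arXiv:math/0611619 — 2 statements merged into one kernel-verified Lean document; each statement's English description precedes it below -/
import Mathlib

section
/- Let u : ℕ⁺ → ℕ⁺ be completely multiplicative. The sequence f_n(q) = [u(n)]_q of quantum integers satisfies the twisted functional equation f_{mn}(q) = f_m(q) · f_n(q^{u(m)}) for all positive integers m and n. -/
open Polynomial

/-- The quantum integer `[k]_q = 1 + q + ⋯ + q^{k-1}`. -/
noncomputable def qint (R : Type*) [CommRing R] (k : ℕ) : Polynomial R :=
  ∑ i ∈ Finset.range k, X ^ i

lemma qint_mul (R : Type*) [CommRing R] (a b : ℕ) :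
    qint R (a * b) = qint R a * (qint R b).comp (X ^ a) := by
  induction b with
  | zero => simp [qint]
  | succ b ih =>
      have h : a * (b + 1) = a * b + a := by ring
      rw [h]
      unfold qint at *
      rw [Finset.sum_range_add, ih, Finset.sum_range_succ]
      simp [mul_add, pow_mul, mul_comm, pow_add, Finset.sum_mul]

/-- For `u : ℕ⁺ → ℕ⁺` completely multiplicative, the sequence `f_n = [u(n)]_q` satisfies
the twisted functional equation `f_{mn}(q) = f_m(q) · f_n(q^{u(m)})`. -/
theorem quantum_twisted_solution (R : Type*) [CommRing R]
    (u : ℕ+ → ℕ+) (hu1 : u 1 = 1) (humul : ∀ m n : ℕ+, u (m * n) = u m * u n) :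
    ∀ m n : ℕ+,
      qint R (u (m * n)) = qint R (u m) * (qint R (u n)).comp (X ^ ((u m : ℕ))) := by
  intro m n
  rw [humul, PNat.mul_coe, qint_mul]
end

section
/- Let P be a set of primes and {h_p : p ∈ P} nonzero polynomials satisfying h_{p₁}(q)·α_{u(p₁)}(h_{p₂})(q) = h_{p₂}(q)·α_{u(p₂)}(h_{p₁})(q) for all p₁, p₂ ∈ P. Then there exists a unique sequence (f_n) of polynomials satisfying f_{mn}(q) = f_m(q)·α_{u(m)}(f_n)(q) for all m,n, with f_p = h_p for all p ∈ P and supp(F) = S(P). -/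
open Polynomial

variable {A : Type*} [CommRing A] [IsDomain A]

/-- A map `φ : A[q] → A[q]` belongs to `End*(A[q])`: it is multiplicative,
preserves `1`, sends `0` to `0`, and sends nonzero polynomials to nonzero polynomials. -/
def IsEndStar (φ : Polynomial A → Polynomial A) : Prop :=
  (∀ f g : Polynomial A, φ (f * g) = φ f * φ g) ∧ φ 1 = 1 ∧ φ 0 = 0 ∧
    ∀ f : Polynomial A, f ≠ 0 → φ f ≠ 0

/-- `α : ℕ⁺ → End*(A[q])` is a monoid homomorphism. -/
def IsEndStarHom (α : ℕ+ → Polynomial A → Polynomial A) : Prop :=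
  (∀ n : ℕ+, IsEndStar (α n)) ∧ (∀ f : Polynomial A, α 1 f = f) ∧
    ∀ m n : ℕ+, ∀ f : Polynomial A, α (m * n) f = α m (α n f)

/-- Positive natural associated to a natural number. -/
def pnOf (p : ℕ) : ℕ+ := ⟨max p 1, by simp⟩

lemma pnOf_coe {p : ℕ} (hp : 0 < p) : ((pnOf p : ℕ+) : ℕ) = p := by
  simp [pnOf, Nat.max_eq_left hp]

lemma pnOf_pnat (p : ℕ+) : pnOf (p : ℕ) = p := by
  apply PNat.coe_injective
  exact pnOf_coe p.pos

/-- The coefficients at primes: `h p` for `p ∈ P`, else `0`. -/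
noncomputable def cpoly (P : Set ℕ+) (h : ℕ+ → Polynomial A) (p : ℕ) : Polynomial A :=
  open Classical in if pnOf p ∈ P then h (pnOf p) else 0

/-- Twisted product of the coefficients along a list of primes. -/
noncomputable def goList (α : ℕ+ → Polynomial A → Polynomial A) (u : ℕ+ → ℕ+)
    (P : Set ℕ+) (h : ℕ+ → Polynomial A) : List ℕ → Polynomial A
  | [] => 1
  | p :: l => cpoly P h p * α (u (pnOf p)) (goList α u P h l)

/-- Product of a list of naturals, as a positive natural. -/
def plProd : List ℕ → ℕ+
  | [] => 1
  | p :: l => pnOf p * plProd l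

lemma plProd_coe : ∀ l : List ℕ, (∀ p ∈ l, 0 < p) → ((plProd l : ℕ+) : ℕ) = l.prod
  | [], _ => rfl
  | p :: l, hl => by
    simp only [plProd, PNat.mul_coe, List.prod_cons]
    rw [pnOf_coe (hl p (by simp)), plProd_coe l (fun q hq => hl q (by simp [hq]))]

section Aux

variable (α : ℕ+ → Polynomial A → Polynomial A) (hα : IsEndStarHom α)
  (u : ℕ+ → ℕ+) (hu1 : u 1 = 1) (humul : ∀ m n : ℕ+, u (m * n) = u m * u n)
  (P : Set ℕ+) (hP : ∀ p ∈ P, (p : ℕ).Prime)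
  (h : ℕ+ → Polynomial A) (hne : ∀ p ∈ P, h p ≠ 0)
  (hcompat : ∀ p₁ ∈ P, ∀ p₂ ∈ P,
    h p₁ * α (u p₁) (h p₂) = h p₂ * α (u p₂) (h p₁))

include hα hcompat in
/-- Global commutation: the key swap identity holds for all naturals. -/
lemma cpoly_swap (a b : ℕ) :
    cpoly P h a * α (u (pnOf a)) (cpoly P h b)
      = cpoly P h b * α (u (pnOf b)) (cpoly P h a) := by
  classical
  unfold cpoly
  by_cases ha : pnOf a ∈ P <;> by_cases hb : pnOf b ∈ P <;>
    simp only [ha, hb, if_pos, if_neg, if_true, if_false]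
  · exact hcompat _ ha _ hb
  · rw [(hα.1 _).2.2.1]; ring
  · rw [(hα.1 _).2.2.1]; ring
  · rw [(hα.1 _).2.2.1]; ring

include hα hcompat in
lemma goList_perm : ∀ {l₁ l₂ : List ℕ}, l₁.Perm l₂ →
    goList α u P h l₁ = goList α u P h l₂ := by
  intro l₁ l₂ hperm
  induction hperm with
  | nil => rfl
  | cons x _ ih => simp [goList, ih]
  | swap x y l =>
      simp only [goList]
      rw [(hα.1 _).1, (hα.1 _).1, ← (hα.2.2 _ _ _), ← (hα.2.2 _ _ _), mul_comm (u (pnOf y)),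
        ← mul_assoc, ← mul_assoc, cpoly_swap α hα u P h hcompat y x]
  | trans _ _ ih₁ ih₂ => rw [ih₁, ih₂]

include hα hu1 humul in
lemma goList_append : ∀ l₁ l₂ : List ℕ,
    goList α u P h (l₁ ++ l₂)
      = goList α u P h l₁ * α (u (plProd l₁)) (goList α u P h l₂)
  | [], l₂ => by simp [goList, plProd, hu1, hα.2.1]
  | p :: l₁, l₂ => by
    show cpoly P h p * α (u (pnOf p)) (goList α u P h (l₁ ++ l₂))
        = (cpoly P h p * α (u (pnOf p)) (goList α u P h l₁))
          * α (u (pnOf p * plProd l₁)) (goList α u P h l₂)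
    rw [goList_append l₁ l₂, (hα.1 _).1, humul, hα.2.2, mul_assoc]

include hα in
lemma goList_ne_zero (hne : ∀ p ∈ P, h p ≠ 0) :
    ∀ l : List ℕ, (goList α u P h l ≠ 0 ↔ ∀ p ∈ l, pnOf p ∈ P)
  | [] => by simp [goList]
  | p :: l => by
    classical
    simp only [goList, List.mem_cons, mul_ne_zero_iff]
    constructor
    · rintro ⟨hc, hrest⟩ q hq
      have hl : goList α u P h l ≠ 0 := by
        intro h0
        rw [h0, (hα.1 _).2.2.1] at hrest
        exact hrest rfl
      rcases hq with rfl | hq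
      · by_contra hp
        simp [cpoly, hp] at hc
      · exact (goList_ne_zero hne l).mp hl q hq
    · intro hall
      have hp : pnOf p ∈ P := hall p (Or.inl rfl)
      refine ⟨by simp [cpoly, hp, hne _ hp], ?_⟩
      exact (hα.1 _).2.2.2 _ ((goList_ne_zero hne l).mpr fun q hq => hall q (Or.inr hq))

end Aux

/-- Given a set `P` of primes and nonzero polynomials `h_p` (`p ∈ P`) satisfying the
compatibility condition `h_{p₁} · α_{u(p₁)}(h_{p₂}) = h_{p₂} · α_{u(p₂)}(h_{p₁})`, there
is a unique sequence `(f_n)` satisfying `f_{mn} = f_m · α_{u(m)}(f_n)` with `f_p = h_p`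
for all `p ∈ P` and support `S(P)`. -/
theorem exists_unique_solution_with_support
    (α : ℕ+ → Polynomial A → Polynomial A) (hα : IsEndStarHom α)
    (u : ℕ+ → ℕ+) (hu1 : u 1 = 1) (humul : ∀ m n : ℕ+, u (m * n) = u m * u n)
    (P : Set ℕ+) (hP : ∀ p ∈ P, (p : ℕ).Prime)
    (h : ℕ+ → Polynomial A) (hne : ∀ p ∈ P, h p ≠ 0)
    (hcompat : ∀ p₁ ∈ P, ∀ p₂ ∈ P,
      h p₁ * α (u p₁) (h p₂) = h p₂ * α (u p₂) (h p₁)) :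
    ∃! f : ℕ+ → Polynomial A,
      (∀ m n : ℕ+, f (m * n) = f m * α (u m) (f n)) ∧
      (∀ p ∈ P, f p = h p) ∧
      (∀ n : ℕ+, f n ≠ 0 ↔ ∀ p : ℕ+, (p : ℕ).Prime → p ∣ n → p ∈ P) := by
  classical
  set f : ℕ+ → Polynomial A := fun n => goList α u P h ((n : ℕ).primeFactorsList) with hf
  -- plProd of the prime factor list of n is n
  have hpl : ∀ n : ℕ+, plProd ((n : ℕ).primeFactorsList) = n := by
    intro n
    apply PNat.coe_injective
    rw [plProd_coe _ (fun p hp => Nat.pos_of_mem_primeFactorsList hp)]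
    exact Nat.prod_primeFactorsList n.ne_zero
  have hmul : ∀ m n : ℕ+, f (m * n) = f m * α (u m) (f n) := by
    intro m n
    have hperm : ((m * n : ℕ+) : ℕ).primeFactorsList.Perm
        ((m : ℕ).primeFactorsList ++ (n : ℕ).primeFactorsList) := by
      rw [PNat.mul_coe]
      exact Nat.perm_primeFactorsList_mul m.ne_zero n.ne_zero
    rw [hf]
    simp only
    rw [goList_perm α hα u P h hcompat hperm, goList_append α hα u hu1 humul P h, hpl]
  have hfp : ∀ p : ℕ+, (p : ℕ).Prime → f p = cpoly P h (p : ℕ) := by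
    intro p hp
    simp only [hf]
    rw [Nat.primeFactorsList_prime hp]
    simp only [goList]
    rw [(hα.1 _).2.1, mul_one]
  have hsupp : ∀ n : ℕ+, f n ≠ 0 ↔ ∀ p : ℕ+, (p : ℕ).Prime → p ∣ n → p ∈ P := by
    intro n
    rw [hf]
    simp only
    rw [goList_ne_zero α hα u P h hne]
    constructor
    · intro hall p hp hdvd
      have : (p : ℕ) ∈ (n : ℕ).primeFactorsList :=
        (Nat.mem_primeFactorsList n.ne_zero).mpr ⟨hp, PNat.dvd_iff.mp hdvd⟩
      have := hall _ this
      rwa [pnOf_pnat] at this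
    · intro hall p hp
      have hprime := Nat.prime_of_mem_primeFactorsList hp
      have hdvd := Nat.dvd_of_mem_primeFactorsList hp
      have h1 : ((pnOf p : ℕ+) : ℕ) = p := pnOf_coe hprime.pos
      apply hall (pnOf p)
      · rwa [h1]
      · rw [PNat.dvd_iff, h1]; exact hdvd
  have hf1 : f 1 = 1 := by
    rw [hf]; simp only [PNat.one_coe, Nat.primeFactorsList_one]; rfl
  refine ⟨f, ⟨hmul, ?_, hsupp⟩, ?_⟩
  · intro p hp
    rw [hfp p (hP p hp)]
    simp [cpoly, pnOf_pnat, hp]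
  · rintro g ⟨gmul, gP, gsupp⟩
    have g1 : g 1 = 1 := by
      have hne1 : g 1 ≠ 0 := by
        rw [gsupp]
        intro p hp hdvd
        have : p = 1 := by
          apply PNat.coe_injective
          simpa using Nat.eq_one_of_dvd_one (PNat.dvd_iff.mp hdvd)
        rw [this] at hp
        exact absurd hp Nat.not_prime_one
      have heq : g 1 * 1 = g 1 * g 1 := by
        rw [mul_one]
        have := gmul 1 1
        rwa [mul_one, hu1, hα.2.1] at this
      exact (mul_left_cancel₀ hne1 heq).symm
    funext n
    induction n using PNat.strongInductionOn with
    | _ n ih =>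
      by_cases hn1 : n = 1
      · rw [hn1, g1, hf1]
      · have hnnat1 : (n : ℕ) ≠ 1 := fun hc => hn1 (PNat.coe_injective (by simp [hc]))
        set p : ℕ := (n : ℕ).minFac with hpdef
        have hp : p.Prime := Nat.minFac_prime hnnat1
        have hpdvd : p ∣ (n : ℕ) := Nat.minFac_dvd _
        set m : ℕ := (n : ℕ) / p with hmdef
        have hpm : p * m = (n : ℕ) := Nat.mul_div_cancel' hpdvd
        have hmpos : 0 < m := by
          rcases Nat.eq_zero_or_pos m with h0 | h0
          · rw [h0, mul_zero] at hpm
            exact absurd hpm.symm n.ne_zero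
          · exact h0
        have hmlt : m < (n : ℕ) := by
          rw [← hpm]
          calc m = 1 * m := (one_mul m).symm
          _ < p * m := by
            exact (Nat.mul_lt_mul_right hmpos).mpr hp.one_lt
        set pp : ℕ+ := pnOf p with hppdef
        set mm : ℕ+ := pnOf m with hmmdef
        have hppc : ((pp : ℕ+) : ℕ) = p := pnOf_coe hp.pos
        have hmmc : ((mm : ℕ+) : ℕ) = m := pnOf_coe hmpos
        have hnsplit : n = pp * mm := by
          apply PNat.coe_injective
          rw [PNat.mul_coe, hppc, hmmc, hpm]
        have hmmlt : mm < n := by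
          rw [← PNat.coe_lt_coe, hmmc]
          exact hmlt
        have hppprime : ((pp : ℕ+) : ℕ).Prime := by rwa [hppc]
        have hgfp : g pp = f pp := by
          by_cases hmem : pp ∈ P
          · rw [gP pp hmem, hfp pp hppprime]
            have : pnOf ((pp : ℕ+) : ℕ) = pp := pnOf_pnat pp
            simp [cpoly, this, hmem]
          · have hg0 : g pp = 0 := by
              by_contra hg
              exact hmem ((gsupp pp).mp hg pp hppprime dvd_rfl)
            have hf0 : f pp = 0 := by
              by_contra hfne
              exact hmem ((hsupp pp).mp hfne pp hppprime dvd_rfl)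
            rw [hg0, hf0]
        rw [hnsplit, gmul, hmul, hgfp, ih mm hmmlt]
end
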